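/- Let Y be a Banach space and Z a subspace of Y with a countable Hamel basis. Then the following are equivalent: (i) there exists a sequence of bounded linear maps T_n : Y → Z such that ‖T_n y − y‖ → 0 for each y ∈ Y; (ii) Z is dense in Y and Y has the bounded approximation property. -/

import Mathlib

open Filter

section aux

variable {Y : Type*} [NormedAddCommGroup Y] [NormedSpace ℂ Y]

lemma aux_perturb [CompleteSpace Y] (Z : Submodule ℂ Y) (hd : Dense (Z : Set Y))
    (T : Y →L[ℂ] Y) (hfd : FiniteDimensional ℂ (LinearMap.range (T : Y →ₗ[ℂ] Y))) (ε : ℝ) (hε : 0 < ε) :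
    ∃ S : Y →L[ℂ] Y, LinearMap.range (S : Y →ₗ[ℂ] Y) ≤ Z ∧ ‖S - T‖ ≤ ε := by
  haveI := hfd
  set W := LinearMap.range (T : Y →ₗ[ℂ] Y) with hW
  let b := Module.finBasis ℂ W
  let T' : Y →L[ℂ] W := T.codRestrict W (fun y => LinearMap.mem_range_self _ y)
  let c : Fin (Module.finrank ℂ W) → Y →L[ℂ] ℂ :=
    fun i => (LinearMap.toContinuousLinearMap (b.coord i)).comp T'
  set A := ∑ i, ‖c i‖ with hA
  have hA0 : 0 ≤ A := Finset.sum_nonneg fun i _ => norm_nonneg _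
  set δ := ε / (A + 1) with hδ
  have hδ0 : 0 < δ := div_pos hε (by linarith)
  have hz : ∀ i, ∃ w ∈ Z, ‖w - (b i : Y)‖ ≤ δ := by
    intro i
    obtain ⟨w, hwZ, hwd⟩ := hd.exists_dist_lt (b i : Y) hδ0
    exact ⟨w, hwZ, by rw [← dist_eq_norm, dist_comm]; exact hwd.le⟩
  choose z hzZ hzd using hz
  refine ⟨∑ i, (c i).smulRight (z i), ?_, ?_⟩
  · rintro _ ⟨y, rfl⟩
    simp only [ContinuousLinearMap.coe_coe, ContinuousLinearMap.coe_sum', Finset.sum_apply,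
      ContinuousLinearMap.smulRight_apply]
    exact Submodule.sum_mem Z fun i _ => Z.smul_mem _ (hzZ i)
  · refine ContinuousLinearMap.opNorm_le_bound _ hε.le fun y => ?_
    have hTy : T y = ∑ i, c i y • (b i : Y) := by
      have h1 : ((∑ i, b.repr (T' y) i • b i : W) : Y) = ((T' y : W) : Y) := by
        rw [b.sum_repr]
      have h2 : ((T' y : W) : Y) = T y := rfl
      rw [← h2, ← h1, Submodule.coe_sum]
      refine Finset.sum_congr rfl fun i _ => ?_
      rw [SetLike.val_smul]
      congr 1
    have key : (∑ i, (c i).smulRight (z i) - T) y = ∑ i, c i y • (z i - (b i : Y)) := by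
      simp only [ContinuousLinearMap.sub_apply, ContinuousLinearMap.coe_sum',
        Finset.sum_apply, ContinuousLinearMap.smulRight_apply, hTy, smul_sub,
        Finset.sum_sub_distrib]
    rw [key]
    have h3 : ‖∑ i, c i y • (z i - (b i : Y))‖ ≤ ∑ i, ‖c i‖ * ‖y‖ * δ := by
      refine (norm_sum_le _ _).trans (Finset.sum_le_sum fun i _ => ?_)
      rw [norm_smul]
      exact mul_le_mul ((c i).le_opNorm y) (hzd i) (norm_nonneg _)
        (by positivity)
    have h4 : ∑ i, ‖c i‖ * ‖y‖ * δ = A * δ * ‖y‖ := by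
      rw [← Finset.sum_mul, ← Finset.sum_mul]; ring
    have h5 : A * δ ≤ ε := by
      have : A * δ ≤ (A + 1) * δ := by
        have := hδ0.le; nlinarith
      have h6 : (A + 1) * δ = ε := by
        rw [hδ, mul_div_cancel₀]; linarith
      linarith
    calc ‖∑ i, c i y • (z i - (b i : Y))‖ ≤ A * δ * ‖y‖ := by rw [← h4]; exact h3
    _ ≤ ε * ‖y‖ := mul_le_mul_of_nonneg_right h5 (norm_nonneg y)

lemma aux_finrank [CompleteSpace Y] {s : Set Y} (hs : s.Countable) (T : Y →L[ℂ] Y)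
    (hT : LinearMap.range (T : Y →ₗ[ℂ] Y) ≤ Submodule.span ℂ s) :
    FiniteDimensional ℂ (LinearMap.range (T : Y →ₗ[ℂ] Y)) := by
  rcases s.eq_empty_or_nonempty with rfl | hne
  · rw [Submodule.span_empty, le_bot_iff] at hT
    rw [hT]; infer_instance
  obtain ⟨f, rfl⟩ := hs.exists_eq_range hne
  set Zk : ℕ → Submodule ℂ Y := fun k => Submodule.span ℂ (f '' Set.Iic k) with hZk
  have hfd : ∀ k, FiniteDimensional ℂ (Zk k) := fun k =>
    FiniteDimensional.span_of_finite ℂ ((Set.finite_Iic k).image f)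
  have hmono : Monotone Zk := fun a b hab =>
    Submodule.span_mono (Set.image_mono (Set.Iic_subset_Iic.mpr hab))
  have hrange : Set.range f = ⋃ k, f '' Set.Iic k := by
    ext y
    simp only [Set.mem_range, Set.mem_iUnion, Set.mem_image, Set.mem_Iic]
    exact ⟨fun ⟨n, hn⟩ => ⟨n, n, le_refl n, hn⟩, fun ⟨k, n, _, hn⟩ => ⟨n, hn⟩⟩
  have hsup : Submodule.span ℂ (Set.range f) = ⨆ k, Zk k := by
    rw [hrange, Submodule.span_iUnion]
  have hcover : (⋃ k, (T ⁻¹' (Zk k) : Set Y)) = Set.univ := by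
    ext y
    simp only [Set.mem_iUnion, Set.mem_preimage, Set.mem_univ, iff_true]
    have hmem : T y ∈ ⨆ k, Zk k := by
      rw [← hsup]; exact hT (LinearMap.mem_range_self _ y)
    rw [Submodule.mem_iSup_of_directed Zk hmono.directed_le] at hmem
    exact hmem
  haveI : Nonempty Y := ⟨0⟩
  obtain ⟨k, hk⟩ := nonempty_interior_of_iUnion_of_closed
    (f := fun k => (T ⁻¹' (Zk k) : Set Y))
    (fun k => by
      haveI := hfd k
      exact ((Zk k).closed_of_finiteDimensional).preimage T.continuous) hcover
  set Wk : Submodule ℂ Y := Submodule.comap (T : Y →ₗ[ℂ] Y) (Zk k) with hWk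
  have htop : Wk = ⊤ := Submodule.eq_top_of_nonempty_interior' _ hk
  have hle : LinearMap.range (T : Y →ₗ[ℂ] Y) ≤ Zk k := by
    rintro _ ⟨y, rfl⟩
    have hy : y ∈ Wk := htop ▸ Submodule.mem_top
    exact hy
  haveI := hfd k
  exact Submodule.finiteDimensional_of_le hle

end aux

theorem stmt_4 {Y : Type*} [NormedAddCommGroup Y] [NormedSpace ℂ Y] [CompleteSpace Y]
    (Z : Submodule ℂ Y) (hZ : ∃ s : Set Y, s.Countable ∧ Submodule.span ℂ s = Z) :
    (∃ T : ℕ → Y →L[ℂ] Y, (∀ n, LinearMap.range (T n : Y →ₗ[ℂ] Y) ≤ Z) ∧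
        ∀ y : Y, Tendsto (fun n => ‖T n y - y‖) atTop (nhds 0)) ↔
      (Dense (Z : Set Y) ∧
        ∃ M : ℝ, ∀ K : Set Y, IsCompact K → ∀ ε : ℝ, 0 < ε →
          ∃ T : Y →L[ℂ] Y, FiniteDimensional ℂ (LinearMap.range (T : Y →ₗ[ℂ] Y)) ∧ ‖T‖ ≤ M ∧
            ∀ y ∈ K, ‖T y - y‖ ≤ ε) := by
  obtain ⟨s, hs, hspan⟩ := hZ
  constructor
  · rintro ⟨T, hrange, htend⟩
    have hconv : ∀ y : Y, Tendsto (fun n => T n y) atTop (nhds y) := fun y =>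
      tendsto_iff_norm_sub_tendsto_zero.mpr (htend y)
    constructor
    · intro y
      exact mem_closure_of_tendsto (hconv y)
        (Eventually.of_forall fun n => hrange n (LinearMap.mem_range_self _ y))
    · -- Banach–Steinhaus
      have hbdd : ∀ y : Y, ∃ C, ∀ n, ‖T n y‖ ≤ C := by
        intro y
        obtain ⟨C, hC⟩ := ((hconv y).norm.bddAbove_range)
        exact ⟨C, fun n => hC ⟨n, rfl⟩⟩
      obtain ⟨C, hC⟩ := banach_steinhaus hbdd
      have hC0 : 0 ≤ C := (norm_nonneg (T 0)).trans (hC 0)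
      refine ⟨C, fun K hK ε hε => ?_⟩
      set δ := ε / (2 * (C + 2)) with hδ
      have hδ0 : 0 < δ := by positivity
      obtain ⟨t, htK, hcov⟩ := hK.elim_nhds_subcover (fun x => Metric.ball x δ)
        (fun x _ => Metric.ball_mem_nhds x hδ0)
      have hev : ∀ᶠ n in atTop, ∀ x ∈ t, ‖T n x - x‖ < ε / 2 := by
        rw [eventually_all_finset]
        exact fun x _ => (htend x).eventually_lt_const (half_pos hε)
      obtain ⟨n, hn⟩ := hev.exists
      refine ⟨T n, aux_finrank hs (T n) (hspan ▸ hrange n), hC n, fun y hy => ?_⟩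
      obtain ⟨x, hxt, hxy⟩ := Set.mem_iUnion₂.mp (hcov hy)
      have hxy' : ‖y - x‖ < δ := by rwa [← dist_eq_norm, ← Metric.mem_ball]
      have h1 : ‖T n y - y‖ ≤ ‖T n (y - x)‖ + ‖T n x - x‖ + ‖x - y‖ := by
        have : T n y - y = T n (y - x) + (T n x - x) + (x - y) := by
          simp only [map_sub]; abel
        rw [this]
        exact (norm_add_le _ _).trans (add_le_add_left (norm_add_le _ _) _)
      have h2 : ‖T n (y - x)‖ ≤ C * δ := by
        calc ‖T n (y - x)‖ ≤ ‖T n‖ * ‖y - x‖ := (T n).le_opNorm _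
        _ ≤ C * δ := mul_le_mul (hC n) hxy'.le (norm_nonneg _) hC0
      have h3 : ‖x - y‖ < δ := by rwa [norm_sub_rev]
      have h4 : (C + 1) * δ ≤ ε / 2 := by
        have he : (C + 2) * δ = ε / 2 := by
          rw [hδ]; field_simp
        nlinarith [hδ0.le]
      calc ‖T n y - y‖ ≤ C * δ + ε / 2 + δ := by
            have := hn x hxt
            linarith
      _ = (C + 1) * δ + ε / 2 := by ring
      _ ≤ ε / 2 + ε / 2 := by linarith
      _ = ε := by ring
  · rintro ⟨hdense, M, hM⟩
    -- Y is separable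
    have hsep : TopologicalSpace.SeparableSpace Y := by
      rw [← hdense.isSeparable_iff]
      rw [← hspan]
      exact hs.isSeparable.span
    haveI := hsep
    haveI : Nonempty Y := ⟨0⟩
    obtain ⟨u, hu⟩ := TopologicalSpace.exists_dense_seq Y
    have hpos : ∀ n : ℕ, (0:ℝ) < 1 / (n + 1) := fun n => by positivity
    have hT := fun n => hM (u '' Set.Iic n) ((Set.finite_Iic n).image u).isCompact
      (1 / (n + 1)) (hpos n)
    choose T hTfd hTnorm hTapprox using hT
    have hS := fun n => aux_perturb Z hdense (T n) (hTfd n) (1 / (n + 1)) (hpos n)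
    choose S hSrange hSdist using hS
    have hM0 : 0 ≤ M := (norm_nonneg (T 0)).trans (hTnorm 0)
    set B := M + 1 with hB
    have hB1 : (1:ℝ) ≤ B := by linarith
    have hSnorm : ∀ n, ‖S n‖ ≤ B := by
      intro n
      calc ‖S n‖ = ‖(S n - T n) + T n‖ := by rw [sub_add_cancel]
      _ ≤ ‖S n - T n‖ + ‖T n‖ := norm_add_le _ _
      _ ≤ 1 / (n + 1) + M := add_le_add (hSdist n) (hTnorm n)
      _ ≤ B := by
          have : (1:ℝ) / (n + 1) ≤ 1 := by
            rw [div_le_one (by positivity)]; linarith [Nat.cast_nonneg (α := ℝ) n]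
          linarith
    refine ⟨S, hSrange, fun y => ?_⟩
    rw [Metric.tendsto_atTop]
    intro ε hε
    -- pick k with u k close to y
    have hB0 : (0:ℝ) < B := by linarith
    obtain ⟨k, hk⟩ := Metric.denseRange_iff.mp hu y (ε / (4 * B)) (by positivity)
    have hky : ‖y - u k‖ < ε / (4 * B) := by rwa [← dist_eq_norm]
    -- pick N large
    obtain ⟨N, hN⟩ := exists_nat_gt ((‖u k‖ + 2) * (4 / ε))
    refine ⟨max k N, fun n hn => ?_⟩
    have hnk : k ≤ n := le_trans (le_max_left _ _) hn
    have hnN : N ≤ n := le_trans (le_max_right _ _) hn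
    have hn1 : (0:ℝ) < n + 1 := by positivity
    have hterm : (1:ℝ) / (n + 1) * (‖u k‖ + 2) < ε / 4 := by
      have hNn : ((‖u k‖ + 2) * (4 / ε)) < n + 1 := by
        calc ((‖u k‖ + 2) * (4 / ε)) < N := hN
        _ ≤ n := by exact_mod_cast hnN
        _ ≤ n + 1 := by linarith
      rw [div_mul_eq_mul_div, div_lt_iff₀ hn1, one_mul]
      have h4ε : (0:ℝ) < 4 / ε := by positivity
      calc ‖u k‖ + 2 = ((‖u k‖ + 2) * (4 / ε)) * (ε / 4) := by
            field_simp
      _ < (n + 1) * (ε / 4) := by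
            apply mul_lt_mul_of_pos_right hNn (by positivity)
      _ = ε / 4 * (n + 1) := by ring
    have happrox : ‖T n (u k) - u k‖ ≤ 1 / (n + 1) :=
      hTapprox n (u k) (Set.mem_image_of_mem u (Set.mem_Iic.mpr hnk))
    have hpert : ‖S n (u k) - T n (u k)‖ ≤ 1 / (n + 1) * ‖u k‖ := by
      calc ‖S n (u k) - T n (u k)‖ = ‖(S n - T n) (u k)‖ := by
            rw [ContinuousLinearMap.sub_apply]
      _ ≤ ‖S n - T n‖ * ‖u k‖ := (S n - T n).le_opNorm _
      _ ≤ 1 / (n + 1) * ‖u k‖ :=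
            mul_le_mul_of_nonneg_right (hSdist n) (norm_nonneg _)
    have hSy : ‖S n (y - u k)‖ ≤ B * (ε / (4 * B)) := by
      calc ‖S n (y - u k)‖ ≤ ‖S n‖ * ‖y - u k‖ := (S n).le_opNorm _
      _ ≤ B * (ε / (4 * B)) := mul_le_mul (hSnorm n) hky.le (norm_nonneg _)
            (by linarith)
    have hBε : B * (ε / (4 * B)) = ε / 4 := by field_simp
    have hsplit : ‖S n y - y‖ ≤ ‖S n (y - u k)‖ + ‖S n (u k) - T n (u k)‖ +
        ‖T n (u k) - u k‖ + ‖y - u k‖ := by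
      have : S n y - y = S n (y - u k) + (S n (u k) - T n (u k)) +
          (T n (u k) - u k) + (u k - y) := by
        simp only [map_sub]; abel
      rw [this]
      calc ‖S n (y - u k) + (S n (u k) - T n (u k)) + (T n (u k) - u k) + (u k - y)‖
          ≤ ‖S n (y - u k) + (S n (u k) - T n (u k)) + (T n (u k) - u k)‖ + ‖u k - y‖ :=
            norm_add_le _ _
      _ ≤ ‖S n (y - u k) + (S n (u k) - T n (u k))‖ + ‖T n (u k) - u k‖ + ‖u k - y‖ := by
            linarith [norm_add_le (S n (y - u k) + (S n (u k) - T n (u k))) (T n (u k) - u k)]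
      _ ≤ ‖S n (y - u k)‖ + ‖S n (u k) - T n (u k)‖ + ‖T n (u k) - u k‖ + ‖u k - y‖ := by
            linarith [norm_add_le (S n (y - u k)) (S n (u k) - T n (u k))]
      _ = ‖S n (y - u k)‖ + ‖S n (u k) - T n (u k)‖ + ‖T n (u k) - u k‖ + ‖y - u k‖ := by
            rw [norm_sub_rev (u k) y]
    have hmid : ‖S n (u k) - T n (u k)‖ + ‖T n (u k) - u k‖ < ε / 4 := by
      have : (1:ℝ) / (n + 1) * ‖u k‖ + 1 / (n + 1) ≤ 1 / (n + 1) * (‖u k‖ + 2) := by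
        have h1n : (0:ℝ) < 1 / (n + 1) := by positivity
        nlinarith
      linarith
    have hlast : ‖y - u k‖ < ε / 4 := by
      have : ε / (4 * B) ≤ ε / 4 := by
        apply div_le_div_of_nonneg_left hε.le (by norm_num)
        nlinarith
      linarith
    rw [Real.dist_eq, sub_zero, abs_of_nonneg (norm_nonneg _)]
    have := hsplit
    linarith [hSy, hBε ▸ hSy]
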